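/- Let α, β ∈ ℂ be complex numbers satisfying α + β = 1 + i and αβ = 1, where i denotes the imaginary unit. Then |α·conj(β)| = 1, but α·conj(β) is not a root of unity: for every natural number n ≥ 1, (α·conj(β))ⁿ ≠ 1. -/

import Mathlib

private def ab : ℕ → ℤ × ℤ
  | 0 => (2, 0)
  | 1 => (1, -1)
  | (k+2) => ((ab (k+1)).1 - 5*(ab (k+1)).2 - (ab k).1,
              (ab (k+1)).2 - (ab (k+1)).1 - (ab k).2)

private noncomputable def u (k : ℕ) : ℝ := ((ab k).1 : ℝ) - (ab k).2 * Real.sqrt 5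

private lemma sqrt5_sq : Real.sqrt 5 ^ 2 = 5 := Real.sq_sqrt (by norm_num)

private lemma one_lt_sqrt5 : (1:ℝ) < Real.sqrt 5 := by
  nlinarith [sqrt5_sq, Real.sqrt_nonneg 5]

private lemma u_rec (k : ℕ) : u (k+2) = (1 + Real.sqrt 5) * u (k+1) - u k := by
  simp only [u, ab]
  push_cast
  linear_combination ((ab (k+1)).2 : ℝ) * sqrt5_sq

private lemma u_facts (k : ℕ) : 2 ≤ u k ∧ u k ≤ u (k+1) := by
  induction k with
  | zero =>
    constructor
    · simp [u, ab]
    · simp [u, ab]; nlinarith [one_lt_sqrt5]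
  | succ n ih =>
    obtain ⟨h1, h2⟩ := ih
    have h3 : 2 ≤ u (n+1) := le_trans h1 h2
    refine ⟨h3, ?_⟩
    rw [u_rec]
    nlinarith [one_lt_sqrt5]

private lemma u_gt (n : ℕ) (hn : 1 ≤ n) : 2 < u n := by
  have mono : Monotone u := monotone_nat_of_le_succ (fun k => (u_facts k).2)
  have h1 : u 1 ≤ u n := mono hn
  have : u 1 = 1 + Real.sqrt 5 := by simp [u, ab]
  nlinarith [one_lt_sqrt5]

private lemma t_eq (z w s : ℂ) (hzw : z * w = 1) (hzws : z + w = 1 - s)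
    (h5 : s ^ 2 = 5) :
    ∀ k : ℕ, z ^ k + w ^ k = ((ab k).1 : ℂ) + ((ab k).2 : ℂ) * s := by
  have key : ∀ k : ℕ,
      (z ^ k + w ^ k = ((ab k).1 : ℂ) + ((ab k).2 : ℂ) * s) ∧
      (z ^ (k+1) + w ^ (k+1) = ((ab (k+1)).1 : ℂ) + ((ab (k+1)).2 : ℂ) * s) := by
    intro k
    induction k with
    | zero =>
      constructor
      · simp [ab]; norm_num
      · simp [ab]; linear_combination hzws
    | succ n ih =>
      obtain ⟨e1, e2⟩ := ih
      refine ⟨e2, ?_⟩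
      have identity : z ^ (n+2) + w ^ (n+2) =
          (z + w) * (z ^ (n+1) + w ^ (n+1)) - (z * w) * (z ^ n + w ^ n) := by ring
      rw [identity, hzws, hzw, e1, e2]
      simp only [ab]
      push_cast
      linear_combination (-((ab (n+1)).2 : ℂ)) * h5
  exact fun k => (key k).1

theorem not_root_of_unity (α β : ℂ)
    (hsum : α + β = 1 + Complex.I) (hprod : α * β = 1) :
    ‖α * starRingEnd ℂ β‖ = 1 ∧
    ∀ n : ℕ, 1 ≤ n → (α * starRingEnd ℂ β) ^ n ≠ 1 := by
  set z := α * starRingEnd ℂ β with hz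
  have hnz : Complex.normSq z = 1 := by
    rw [hz, map_mul, Complex.normSq_conj, ← map_mul, hprod, map_one]
  have habs : ‖z‖ = 1 := by
    rw [Complex.norm_def, hnz, Real.sqrt_one]
  have hzw : z * starRingEnd ℂ z = 1 := by
    rw [Complex.mul_conj, hnz, Complex.ofReal_one]
  -- (α-β)^2 = 2I - 4
  have hd2 : (α - β) ^ 2 = 2 * Complex.I - 4 := by
    linear_combination (α + β + 1 + Complex.I) * hsum - 4 * hprod + Complex.I_sq
  have h20 : Complex.normSq (α - β) ^ 2 = 20 := by
    rw [← map_pow, hd2]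
    simp [Complex.normSq_apply, Complex.sub_re, Complex.sub_im]
    norm_num
  have hr : Complex.normSq (α - β) = 2 * Real.sqrt 5 := by
    have h0 : 0 ≤ Complex.normSq (α - β) := Complex.normSq_nonneg _
    have : (2 * Real.sqrt 5) ^ 2 = 20 := by nlinarith [sqrt5_sq]
    nlinarith [Real.sqrt_nonneg 5]
  have hsplus : (α + β) * starRingEnd ℂ (α + β) = 2 := by
    rw [hsum]
    simp [map_add, Complex.conj_I]
    ring_nf
    linear_combination -Complex.I_sq
  have hsminus : (α - β) * starRingEnd ℂ (α - β) = ((2 * Real.sqrt 5 : ℝ) : ℂ) := by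
    rw [Complex.mul_conj, hr]
  have hzws : z + starRingEnd ℂ z = 1 - ((Real.sqrt 5 : ℝ) : ℂ) := by
    have key : 2 * (z + starRingEnd ℂ z) =
        (α + β) * starRingEnd ℂ (α + β) - (α - β) * starRingEnd ℂ (α - β) := by
      simp only [hz, map_add, map_sub, map_mul, Complex.conj_conj]
      ring
    rw [hsplus, hsminus] at key
    push_cast at key ⊢
    linear_combination key / 2
  refine ⟨habs, ?_⟩
  intro n hn hzn
  have h5 : ((Real.sqrt 5 : ℝ) : ℂ) ^ 2 = 5 := by
    rw [← Complex.ofReal_pow, sqrt5_sq]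
    norm_num
  have ht := t_eq z (starRingEnd ℂ z) ((Real.sqrt 5 : ℝ) : ℂ) hzw hzws h5 n
  have hwn : (starRingEnd ℂ z) ^ n = 1 := by
    rw [← map_pow, hzn, map_one]
  rw [hzn, hwn] at ht
  -- 2 = a_n + b_n √5 in ℝ
  have hreal : (2 : ℝ) = ((ab n).1 : ℝ) + ((ab n).2 : ℝ) * Real.sqrt 5 := by
    have := ht
    push_cast at this
    exact_mod_cast this
  have irr : Irrational (Real.sqrt 5) := by
    have := (Nat.prime_iff.mp (by norm_num : Nat.Prime 5))
    exact (Nat.Prime.irrational_sqrt (by norm_num : Nat.Prime 5))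
  have hb : (ab n).2 = 0 := by
    by_contra hb0
    apply irr
    refine ⟨(2 - (ab n).1 : ℤ) / ((ab n).2 : ℤ), ?_⟩
    have hbne : ((ab n).2 : ℝ) ≠ 0 := Int.cast_ne_zero.mpr hb0
    push_cast
    field_simp
    linarith [hreal]
  have ha : ((ab n).1 : ℝ) = 2 := by
    rw [hb] at hreal
    push_cast at hreal
    linarith
  have := u_gt n hn
  rw [u, hb, ha] at this
  push_cast at this
  linarith
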